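/- Let M be a real n×n matrix with ‖M^i‖₂ ≤ C ρ^i for all i ≥ 0 for some C ≥ 1 and ρ ∈ (0,1), let σ > 0, let x₀ ∈ ℝⁿ, and let N ≥ 1 be an integer. Define Σ_i := σ² ∑_{k=0}^{i-1} M^k (Mᵀ)^k and Σ_∞ := σ² ∑_{k=0}^∞ M^k (Mᵀ)^k. Then ‖ N Σ_∞ − ∑_{i=0}^{N-1} ( M^i x₀ x₀ᵀ (M^i)ᵀ + Σ_i ) ‖₂ ≤ (C²/(1−ρ²)) · ( ‖x₀‖² + ‖Σ_∞‖₂ ). -/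

import Mathlib

open Matrix MeasureTheory ProbabilityTheory Filter

/-- Frobenius norm of a real matrix. -/
noncomputable def frob {α β : Type*} [Fintype α] [Fintype β] (A : Matrix α β ℝ) : ℝ :=
  Real.sqrt (∑ i, ∑ j, (A i j) ^ 2)

/-- Spectral norm (largest singular value) of a real matrix. -/
noncomputable def spec {α β : Type*} [Fintype α] [Fintype β] [DecidableEq β]
    (A : Matrix α β ℝ) : ℝ :=
  ‖LinearMap.toContinuousLinearMap (Matrix.toEuclideanLin A)‖

/-- The positive semidefinite square root of a positive semidefinite real matrix
(junk value `0` if the matrix is not positive semidefinite). -/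
noncomputable def msqrt {α : Type*} [Fintype α] [DecidableEq α]
    (M : Matrix α α ℝ) : Matrix α α ℝ :=
  open scoped Classical in
  if h : M.PosSemidef then
    (h.1.eigenvectorUnitary : Matrix α α ℝ) *
      diagonal ((↑) ∘ (Real.sqrt ·) ∘ h.1.eigenvalues) *
      (star h.1.eigenvectorUnitary : Matrix α α ℝ) else 0

/-- Euclidean norm of a real vector. -/
noncomputable def vnorm {α : Type*} [Fintype α] (v : α → ℝ) : ℝ :=
  Real.sqrt (∑ i, (v i) ^ 2)

open scoped Matrix.Norms.L2Operator

lemma spec_eq_l2norm {n : ℕ} (A : Matrix (Fin n) (Fin n) ℝ) : spec A = ‖A‖ := rfl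

lemma vnorm_eq_norm {n : ℕ} (v : Fin n → ℝ) :
    vnorm v = ‖(EuclideanSpace.equiv (Fin n) ℝ).symm v‖ := by
  rw [EuclideanSpace.norm_eq, vnorm]
  congr 1
  refine Finset.sum_congr rfl fun i _ => ?_
  rw [show ((EuclideanSpace.equiv (Fin n) ℝ).symm v) i = v i from rfl, Real.norm_eq_abs, sq_abs]

lemma norm_transpose_eq {n : ℕ} (A : Matrix (Fin n) (Fin n) ℝ) : ‖Aᵀ‖ = ‖A‖ := by
  rw [← Matrix.conjTranspose_eq_transpose_of_trivial]
  exact Matrix.l2_opNorm_conjTranspose A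

lemma vecMulVec_mulVec' {n : ℕ} (v w y : Fin n → ℝ) :
    (vecMulVec v w) *ᵥ y = (w ⬝ᵥ y) • v := by
  funext i
  simp [vecMulVec_apply, Matrix.mulVec, dotProduct, Finset.sum_mul, Finset.mul_sum, mul_comm,
    mul_assoc, mul_left_comm]

lemma norm_vecMulVec_le {n : ℕ} (v w : Fin n → ℝ) :
    ‖vecMulVec v w‖ ≤ vnorm v * vnorm w := by
  rw [Matrix.l2_opNorm_def]
  refine ContinuousLinearMap.opNorm_le_bound _
    (mul_nonneg (Real.sqrt_nonneg _) (Real.sqrt_nonneg _)) fun y => ?_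
  have h1 : (LinearEquiv.trans (Matrix.toEuclideanLin) LinearMap.toContinuousLinearMap
      (vecMulVec v w)) y
      = (WithLp.equiv 2 (Fin n → ℝ)).symm ((vecMulVec v w) *ᵥ (WithLp.equiv 2 (Fin n → ℝ)) y) :=
    rfl
  rw [h1, vecMulVec_mulVec']
  have h2 : (WithLp.equiv 2 (Fin n → ℝ)).symm ((w ⬝ᵥ (WithLp.equiv 2 (Fin n → ℝ)) y) • v)
      = (w ⬝ᵥ (WithLp.equiv 2 (Fin n → ℝ)) y) • (WithLp.equiv 2 (Fin n → ℝ)).symm v := rfl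
  rw [h2, norm_smul]
  have hcs : |w ⬝ᵥ (WithLp.equiv 2 (Fin n → ℝ)) y|
      ≤ ‖(WithLp.equiv 2 (Fin n → ℝ)).symm w‖ * ‖y‖ := by
    have : w ⬝ᵥ (WithLp.equiv 2 (Fin n → ℝ)) y
        = (inner ℝ ((WithLp.equiv 2 (Fin n → ℝ)).symm w) y : ℝ) := by
      rw [PiLp.inner_apply]
      simp [dotProduct, RCLike.inner_apply, mul_comm]
    rw [this]
    exact abs_real_inner_le_norm _ _
  calc |w ⬝ᵥ (WithLp.equiv 2 (Fin n → ℝ)) y| * ‖(WithLp.equiv 2 (Fin n → ℝ)).symm v‖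
      ≤ (‖(WithLp.equiv 2 (Fin n → ℝ)).symm w‖ * ‖y‖) * ‖(WithLp.equiv 2 (Fin n → ℝ)).symm v‖ :=
        mul_le_mul_of_nonneg_right hcs (norm_nonneg _)
    _ = vnorm v * vnorm w * ‖y‖ := by
        rw [vnorm_eq_norm, vnorm_eq_norm,
          show ((EuclideanSpace.equiv (Fin n) ℝ).symm v : EuclideanSpace ℝ (Fin n))
            = (WithLp.equiv 2 (Fin n → ℝ)).symm v from rfl,
          show ((EuclideanSpace.equiv (Fin n) ℝ).symm w : EuclideanSpace ℝ (Fin n))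
            = (WithLp.equiv 2 (Fin n → ℝ)).symm w from rfl]
        ring

theorem conditional_second_moment_concentration {n : ℕ}
    (M : Matrix (Fin n) (Fin n) ℝ) (C ρ σ : ℝ) (x0 : Fin n → ℝ) (N : ℕ)
    (hC : 1 ≤ C) (hρ : ρ ∈ Set.Ioo (0 : ℝ) 1) (hσ : 0 < σ) (hN : 1 ≤ N)
    (hM : ∀ i : ℕ, spec (M ^ i) ≤ C * ρ ^ i) :
    spec ((N : ℝ) • (σ ^ 2 • ∑' k : ℕ, M ^ k * Mᵀ ^ k)
        - ∑ i ∈ Finset.range N,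
            (vecMulVec ((M ^ i) *ᵥ x0) ((M ^ i) *ᵥ x0)
              + σ ^ 2 • ∑ k ∈ Finset.range i, M ^ k * Mᵀ ^ k))
      ≤ C ^ 2 / (1 - ρ ^ 2) *
          (vnorm x0 ^ 2 + spec (σ ^ 2 • ∑' k : ℕ, M ^ k * Mᵀ ^ k)) := by
  obtain ⟨hρ0, hρ1⟩ := hρ
  simp only [spec_eq_l2norm] at hM ⊢
  set f : ℕ → Matrix (Fin n) (Fin n) ℝ := fun k => M ^ k * Mᵀ ^ k with hf
  have hnorm_pow : ∀ i : ℕ, ‖M ^ i‖ ≤ C * ρ ^ i := hM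
  have hρ2 : (0:ℝ) ≤ ρ ^ 2 := sq_nonneg ρ
  have hρ2lt : ρ ^ 2 < 1 := by nlinarith
  have hfb : ∀ k : ℕ, ‖f k‖ ≤ C ^ 2 * (ρ ^ 2) ^ k := by
    intro k
    have h1 : ‖f k‖ ≤ ‖M ^ k‖ * ‖Mᵀ ^ k‖ := Matrix.l2_opNorm_mul _ _
    have h2 : ‖Mᵀ ^ k‖ = ‖M ^ k‖ := by rw [← transpose_pow, norm_transpose_eq]
    have h3 : (0:ℝ) ≤ C * ρ ^ k := by positivity
    calc ‖f k‖ ≤ ‖M ^ k‖ * ‖M ^ k‖ := by rw [h2] at h1; exact h1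
      _ ≤ (C * ρ ^ k) * (C * ρ ^ k) :=
          mul_le_mul (hnorm_pow k) (hnorm_pow k) (norm_nonneg _) h3
      _ = C ^ 2 * (ρ ^ 2) ^ k := by ring
  have hsummable : Summable f := by
    refine Summable.of_norm_bounded ?_ hfb
    exact (summable_geometric_of_lt_one hρ2 hρ2lt).mul_left _
  set T : Matrix (Fin n) (Fin n) ℝ := ∑' k, f k with hT
  set S : Matrix (Fin n) (Fin n) ℝ := σ ^ 2 • T with hS
  -- tail identity
  have htail : ∀ i : ℕ, S - σ ^ 2 • ∑ k ∈ Finset.range i, f k = M ^ i * S * Mᵀ ^ i := by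
    intro i
    have h1 : ∑ k ∈ Finset.range i, f k + ∑' k, f (k + i) = T := Summable.sum_add_tsum_nat_add i hsummable
    have h2 : ∀ k : ℕ, f (k + i) = M ^ i * (f k * Mᵀ ^ i) := by
      intro k
      simp only [hf]
      rw [show M ^ (k + i) = M ^ i * M ^ k by rw [add_comm, pow_add], pow_add,
        mul_assoc, mul_assoc, ← mul_assoc (M ^ k)]
    have h3 : ∑' k, f (k + i) = M ^ i * (T * Mᵀ ^ i) := by
      calc ∑' k, f (k + i) = ∑' k, M ^ i * (f k * Mᵀ ^ i) := tsum_congr h2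
        _ = M ^ i * ∑' k, f k * Mᵀ ^ i := (hsummable.mul_right _).tsum_mul_left _
        _ = M ^ i * (T * Mᵀ ^ i) := by rw [hsummable.tsum_mul_right]
    have h4 : T - ∑ k ∈ Finset.range i, f k = M ^ i * (T * Mᵀ ^ i) := by
      rw [← h3]; rw [← h1]; abel
    calc S - σ ^ 2 • ∑ k ∈ Finset.range i, f k
        = σ ^ 2 • (T - ∑ k ∈ Finset.range i, f k) := by rw [smul_sub]
      _ = σ ^ 2 • (M ^ i * (T * Mᵀ ^ i)) := by rw [h4]
      _ = M ^ i * S * Mᵀ ^ i := by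
          rw [hS, mul_smul_comm, smul_mul_assoc, mul_assoc]
  -- rewrite the LHS matrix
  have hNS : (N : ℝ) • S = ∑ _i ∈ Finset.range N, S := by
    rw [Finset.sum_const, Finset.card_range, Nat.cast_smul_eq_nsmul]
  have hsplit : (N : ℝ) • S - ∑ i ∈ Finset.range N,
      (vecMulVec ((M ^ i) *ᵥ x0) ((M ^ i) *ᵥ x0) + σ ^ 2 • ∑ k ∈ Finset.range i, f k)
      = ∑ i ∈ Finset.range N,
        ((M ^ i * S * Mᵀ ^ i) - vecMulVec ((M ^ i) *ᵥ x0) ((M ^ i) *ᵥ x0)) := by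
    rw [hNS, ← Finset.sum_sub_distrib]
    refine Finset.sum_congr rfl fun i _ => ?_
    rw [← htail i]
    abel
  rw [hsplit]
  -- termwise bound
  have hterm : ∀ i ∈ Finset.range N,
      ‖(M ^ i * S * Mᵀ ^ i) - vecMulVec ((M ^ i) *ᵥ x0) ((M ^ i) *ᵥ x0)‖
      ≤ C ^ 2 * (ρ ^ 2) ^ i * (vnorm x0 ^ 2 + ‖S‖) := by
    intro i _
    have hMi := hnorm_pow i
    have hMi0 : (0:ℝ) ≤ C * ρ ^ i := by positivity
    have h1 : ‖M ^ i * S * Mᵀ ^ i‖ ≤ (C * ρ ^ i) * ‖S‖ * (C * ρ ^ i) := by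
      calc ‖M ^ i * S * Mᵀ ^ i‖ ≤ ‖M ^ i * S‖ * ‖Mᵀ ^ i‖ := Matrix.l2_opNorm_mul _ _
        _ ≤ (‖M ^ i‖ * ‖S‖) * ‖Mᵀ ^ i‖ :=
            mul_le_mul_of_nonneg_right (Matrix.l2_opNorm_mul _ _) (norm_nonneg _)
        _ ≤ ((C * ρ ^ i) * ‖S‖) * (C * ρ ^ i) := by
            have h2 : ‖Mᵀ ^ i‖ = ‖M ^ i‖ := by rw [← transpose_pow, norm_transpose_eq]
            rw [h2]
            have := mul_le_mul_of_nonneg_right hMi (norm_nonneg S)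
            exact mul_le_mul (mul_le_mul_of_nonneg_right hMi (norm_nonneg S)) hMi
              (norm_nonneg _) (by positivity)
    have hv : vnorm ((M ^ i) *ᵥ x0) ≤ C * ρ ^ i * vnorm x0 := by
      rw [vnorm_eq_norm, vnorm_eq_norm]
      calc ‖(EuclideanSpace.equiv (Fin n) ℝ).symm ((M ^ i) *ᵥ x0)‖
          ≤ ‖M ^ i‖ * ‖(EuclideanSpace.equiv (Fin n) ℝ).symm x0‖ :=
            Matrix.l2_opNorm_mulVec (M ^ i) ((EuclideanSpace.equiv (Fin n) ℝ).symm x0)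
        _ ≤ C * ρ ^ i * ‖(EuclideanSpace.equiv (Fin n) ℝ).symm x0‖ :=
            mul_le_mul_of_nonneg_right hMi (norm_nonneg _)
    have h2 : ‖vecMulVec ((M ^ i) *ᵥ x0) ((M ^ i) *ᵥ x0)‖ ≤ (C * ρ ^ i * vnorm x0) ^ 2 := by
      have := norm_vecMulVec_le ((M ^ i) *ᵥ x0) ((M ^ i) *ᵥ x0)
      have hv0 : (0:ℝ) ≤ vnorm ((M ^ i) *ᵥ x0) := Real.sqrt_nonneg _
      calc ‖vecMulVec ((M ^ i) *ᵥ x0) ((M ^ i) *ᵥ x0)‖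
          ≤ vnorm ((M ^ i) *ᵥ x0) * vnorm ((M ^ i) *ᵥ x0) := this
        _ ≤ (C * ρ ^ i * vnorm x0) * (C * ρ ^ i * vnorm x0) :=
            mul_le_mul hv hv hv0 (mul_nonneg (by positivity) (Real.sqrt_nonneg _))
        _ = (C * ρ ^ i * vnorm x0) ^ 2 := by ring
    calc ‖(M ^ i * S * Mᵀ ^ i) - vecMulVec ((M ^ i) *ᵥ x0) ((M ^ i) *ᵥ x0)‖
        ≤ ‖M ^ i * S * Mᵀ ^ i‖ + ‖vecMulVec ((M ^ i) *ᵥ x0) ((M ^ i) *ᵥ x0)‖ := norm_sub_le _ _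
      _ ≤ (C * ρ ^ i) * ‖S‖ * (C * ρ ^ i) + (C * ρ ^ i * vnorm x0) ^ 2 := add_le_add h1 h2
      _ = C ^ 2 * (ρ ^ 2) ^ i * (vnorm x0 ^ 2 + ‖S‖) := by ring
  have hsum := norm_sum_le_of_le (Finset.range N) hterm
  refine hsum.trans ?_
  have hgeom : ∑ i ∈ Finset.range N, (ρ ^ 2) ^ i ≤ (1 - ρ ^ 2)⁻¹ := by
    have h1 : ∑ i ∈ Finset.range N, (ρ ^ 2) ^ i ≤ ∑' i : ℕ, (ρ ^ 2) ^ i :=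
      Summable.sum_le_tsum _ (fun i _ => by positivity) (summable_geometric_of_lt_one hρ2 hρ2lt)
    rwa [tsum_geometric_of_lt_one hρ2 hρ2lt] at h1
  have hc : (0:ℝ) ≤ vnorm x0 ^ 2 + ‖S‖ := by
    have : (0:ℝ) ≤ vnorm x0 ^ 2 := sq_nonneg _
    linarith [norm_nonneg S]
  calc ∑ i ∈ Finset.range N, C ^ 2 * (ρ ^ 2) ^ i * (vnorm x0 ^ 2 + ‖S‖)
      = C ^ 2 * (vnorm x0 ^ 2 + ‖S‖) * ∑ i ∈ Finset.range N, (ρ ^ 2) ^ i := by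
        rw [Finset.mul_sum]; exact Finset.sum_congr rfl fun i _ => by ring
    _ ≤ C ^ 2 * (vnorm x0 ^ 2 + ‖S‖) * (1 - ρ ^ 2)⁻¹ :=
        mul_le_mul_of_nonneg_left hgeom (mul_nonneg (by positivity) hc)
    _ = C ^ 2 / (1 - ρ ^ 2) * (vnorm x0 ^ 2 + ‖S‖) := by
        field_simp
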